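/- Let (R,m) be a d-dimensional Cohen–Macaulay Noetherian local ring (d ≥ 1) and I an m-primary ideal. Suppose (x, a_1, …, a_{d−1}) with x ∈ m, a_i ∈ I, satisfies ℓ(mI/(xI + (a_1,…,a_{d−1})m)) = 1. Then ℓ(mI^n/((a_1,…,a_{d−1})mI^{n−1} + xI^n)) ≤ 1 for all n ≥ 1. Moreover, there exist y ∈ m and b ∈ I such that mI^n = (a_1,…,a_{d−1})mI^{n−1} + xI^n + (yb^n) for all n ≥ 1. -/

import Mathlib

open IsLocalRing

/-- The length of a module, as the Krull dimension of its lattice of submodules. -/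
noncomputable def modLength (R M : Type*) [Ring R] [AddCommGroup M] [Module R M] :
    WithBot ℕ∞ :=
  Order.krullDim (Submodule R M)

/-- The length `ℓ(P/N)` of the subquotient `P/N` of `R` determined by ideals `N ≤ P`. -/
noncomputable def qlen {R : Type*} [CommRing R] (N P : Ideal R) : WithBot ℕ∞ :=
  modLength R (↥P ⧸ (Submodule.comap P.subtype N))

/-- A Noetherian local ring is Cohen–Macaulay if some system of parameters
is a regular sequence. -/
def IsCMLocal (R : Type*) [CommRing R] [IsLocalRing R] : Prop :=
  ∃ rs : List R, RingTheory.Sequence.IsRegular R rs ∧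
    (Ideal.span {x | x ∈ rs}).radical = maximalIdeal R ∧
    (rs.length : WithBot ℕ∞) = ringKrullDim R


open Pointwise


lemma krullDim_le_one_of_forall {α : Type*} [PartialOrder α] [BoundedOrder α]
    (h : ∀ s : α, s = ⊥ ∨ s = ⊤) : Order.krullDim α ≤ 1 := by
  unfold Order.krullDim
  apply iSup_le
  intro p
  have hlen : p.length ≤ 1 := by
    by_contra hc
    push_neg at hc
    have h2 : 2 ≤ p.length := hc
    have h01 : p ⟨0, by omega⟩ < p ⟨1, by omega⟩ := p.strictMono (by simp [Fin.lt_def])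
    have h12 : p ⟨1, by omega⟩ < p ⟨2, by omega⟩ := p.strictMono (by simp [Fin.lt_def])
    rcases h (p ⟨1, by omega⟩) with he | he
    · rw [he] at h01; exact not_lt_bot h01
    · rw [he] at h12; exact not_top_lt h12
  exact_mod_cast hlen

lemma simple_of_krullDim_eq_one {α : Type*} [PartialOrder α] [BoundedOrder α]
    (h : Order.krullDim α = 1) : (⊥ : α) ≠ ⊤ ∧ ∀ s : α, s = ⊥ ∨ s = ⊤ := by
  constructor
  · intro hbt
    have hsub : ∀ s t : α, s = t := by
      intro s t
      have hs : s = ⊥ := le_antisymm (by rw [hbt]; exact le_top) bot_le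
      have ht : t = ⊥ := le_antisymm (by rw [hbt]; exact le_top) bot_le
      rw [hs, ht]
    have : Unique α := ⟨⟨⊥⟩, fun a => hsub a ⊥⟩
    rw [Order.krullDim_eq_zero_of_unique] at h
    exact absurd h (by decide)
  · intro s
    by_contra hc
    push_neg at hc
    obtain ⟨h1, h2⟩ := hc
    have hlt1 : (⊥ : α) < s := lt_of_le_of_ne bot_le (Ne.symm h1)
    have hlt2 : s < (⊤ : α) := lt_of_le_of_ne le_top h2
    let p : LTSeries α := (RelSeries.singleton _ (⊥ : α)).snoc s hlt1 |>.snoc ⊤ (by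
      exact hlt2)
    have := Order.LTSeries.length_le_krullDim p
    rw [h] at this
    have hp : p.length = 2 := rfl
    rw [hp] at this
    exact absurd this (by decide)

section
variable {R : Type*} [CommRing R] [IsLocalRing R]

lemma qlen_le_one {N P : Ideal R} (g : R) (hgP : g ∈ P)
    (hgen : P ≤ N ⊔ Ideal.span {g}) (hm : maximalIdeal R * P ≤ N) : qlen N P ≤ 1 := by
  set N' : Submodule R ↥P := Submodule.comap P.subtype N with hN'
  apply krullDim_le_one_of_forall
  intro S
  have key : ∀ p : ↥P, ∃ r : R,
      (Submodule.Quotient.mk p : ↥P ⧸ N') = r • Submodule.Quotient.mk ⟨g, hgP⟩ := by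
    intro p
    have hp : (p : R) ∈ N ⊔ Ideal.span {g} := hgen p.2
    rw [Submodule.mem_sup] at hp
    obtain ⟨n, hn, z, hz, hnz⟩ := hp
    rw [Ideal.mem_span_singleton'] at hz
    obtain ⟨r, hr⟩ := hz
    refine ⟨r, ?_⟩
    rw [← Submodule.Quotient.mk_smul, Submodule.Quotient.eq]
    refine Submodule.mem_comap.mpr ?_
    show ((p : R) - r • g) ∈ N
    simp only [smul_eq_mul]
    rw [← hr] at hnz
    rw [show (p : R) - r * g = n by rw [← hnz]; ring]
    exact hn
  by_cases hS : S = ⊥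
  · left; exact hS
  · right
    obtain ⟨q, hqS, hq0⟩ := (Submodule.ne_bot_iff S).mp hS
    obtain ⟨p, rfl⟩ := Submodule.Quotient.mk_surjective _ q
    obtain ⟨r, hr⟩ := key p
    have hru : IsUnit r := by
      by_contra hru
      have hrm : r ∈ maximalIdeal R := hru
      apply hq0
      rw [hr, ← Submodule.Quotient.mk_smul, Submodule.Quotient.mk_eq_zero]
      refine Submodule.mem_comap.mpr ?_
      show r • g ∈ N
      exact hm (Ideal.mul_mem_mul hrm hgP)
    have hgS : (Submodule.Quotient.mk ⟨g, hgP⟩ : ↥P ⧸ N') ∈ S := by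
      obtain ⟨u, rfl⟩ := hru
      have := S.smul_mem ((u⁻¹ : Rˣ) : R) hqS
      rwa [hr, smul_smul, Units.inv_mul, one_smul] at this
    rw [eq_top_iff]
    intro q' _
    obtain ⟨p', rfl⟩ := Submodule.Quotient.mk_surjective _ q'
    obtain ⟨r', hr'⟩ := key p'
    rw [hr']
    exact S.smul_mem r' hgS

lemma qlen_eq_one_extract [IsNoetherianRing R] {N P : Ideal R} (T : Set R)
    (hT : P = Ideal.span T) (h : qlen N P = 1) :
    maximalIdeal R * P ≤ N ∧ ∃ g ∈ T, P ≤ N ⊔ Ideal.span {g} := by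
  set N' : Submodule R ↥P := Submodule.comap P.subtype N with hN'
  obtain ⟨hnt, hsimp⟩ := simple_of_krullDim_eq_one (h : Order.krullDim (Submodule R (↥P ⧸ N')) = 1)
  -- Nakayama: maximalIdeal • ⊤ ≠ ⊤
  have hfg : (⊤ : Submodule R (↥P ⧸ N')).FG := IsNoetherian.noetherian ⊤
  have hjac : maximalIdeal R ≤ (⊥ : Ideal R).jacobson := by
    rw [IsLocalRing.jacobson_eq_maximalIdeal ⊥ bot_ne_top]
  have hnak : maximalIdeal R • (⊤ : Submodule R (↥P ⧸ N')) ≠ ⊤ := by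
    intro hc
    exact hnt (Submodule.eq_bot_of_le_smul_of_le_jacobson_bot (maximalIdeal R) ⊤ hfg
      hc.ge hjac).symm
  have hsmul : maximalIdeal R • (⊤ : Submodule R (↥P ⧸ N')) = ⊥ :=
    (hsimp _).resolve_right hnak
  have hmP : maximalIdeal R * P ≤ N := by
    rw [Ideal.mul_le]
    intro r hr p hp
    have : r • (Submodule.Quotient.mk (⟨p, hp⟩ : ↥P) : ↥P ⧸ N') = 0 := by
      rw [← Submodule.mem_bot (R := R), ← hsmul]
      exact Submodule.smul_mem_smul hr trivial
    rw [← Submodule.Quotient.mk_smul, Submodule.Quotient.mk_eq_zero] at this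
    exact this
  refine ⟨hmP, ?_⟩
  -- find generator not in N
  have hTN : ∃ g ∈ T, g ∉ N := by
    by_contra hc
    push_neg at hc
    have hPN : P ≤ N := hT ▸ Ideal.span_le.mpr hc
    apply hnt
    rw [eq_top_iff]
    rintro q -
    obtain ⟨p, rfl⟩ := Submodule.Quotient.mk_surjective _ q
    rw [Submodule.mem_bot, Submodule.Quotient.mk_eq_zero]
    exact hPN p.2
  obtain ⟨g, hgT, hgN⟩ := hTN
  have hgP : g ∈ P := hT ▸ Ideal.subset_span hgT
  refine ⟨g, hgT, ?_⟩
  have hSne : (Submodule.span R {(Submodule.Quotient.mk ⟨g, hgP⟩ : ↥P ⧸ N')}) ≠ ⊥ := by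
    intro hc
    apply hgN
    have : (Submodule.Quotient.mk (⟨g, hgP⟩ : ↥P) : ↥P ⧸ N') = 0 := by
      rw [← Submodule.mem_bot (R := R), ← hc]
      exact Submodule.mem_span_singleton_self _
    rwa [Submodule.Quotient.mk_eq_zero] at this
  have hStop := (hsimp _).resolve_left hSne
  intro p hp
  have : (Submodule.Quotient.mk (⟨p, hp⟩ : ↥P) : ↥P ⧸ N') ∈
      Submodule.span R {(Submodule.Quotient.mk ⟨g, hgP⟩ : ↥P ⧸ N')} := by
    rw [hStop]; trivial
  rw [Submodule.mem_span_singleton] at this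
  obtain ⟨r, hr⟩ := this
  rw [← Submodule.Quotient.mk_smul, Submodule.Quotient.eq] at hr
  have hd : r • g - p ∈ N := hr
  rw [Submodule.mem_sup]
  exact ⟨p - r • g, by rw [show p - r • g = -(r • g - p) by ring]; exact N.neg_mem hd,
    r • g, Ideal.mem_span_singleton'.mpr ⟨r, rfl⟩, by ring⟩

end

/-- in a `d`-dimensional CM local ring (`d ≥ 1`), if `I` is `m`-primary,
`x ∈ m`, `a₁, …, a_{d−1} ∈ I`, `J = (a₁,…,a_{d−1})` and `ℓ(mI/(xI + Jm)) = 1`, then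
`ℓ(mIⁿ/(JmI^{n−1} + xIⁿ)) ≤ 1` for all `n ≥ 1`; moreover there are `y ∈ m`, `b ∈ I` with
`mIⁿ = JmI^{n−1} + xIⁿ + (ybⁿ)` for all `n ≥ 1`. -/
theorem stmt8 {R : Type*} [CommRing R] [IsLocalRing R] [IsNoetherianRing R]
    (d : ℕ) (hd : 1 ≤ d)
    (hCM : IsCMLocal R) (hdim : ringKrullDim R = (d : WithBot ℕ∞))
    (I : Ideal R) (hIm : I ≤ maximalIdeal R) (hprim : ∃ k, maximalIdeal R ^ k ≤ I)
    (x : R) (hx : x ∈ maximalIdeal R)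
    (a : Fin (d - 1) → R) (ha : ∀ i, a i ∈ I)
    (hone : qlen (Ideal.span {x} * I + Ideal.span (Set.range a) * maximalIdeal R)
        (maximalIdeal R * I) = 1) :
    (∀ n : ℕ, 1 ≤ n →
      qlen (Ideal.span (Set.range a) * (maximalIdeal R * I ^ (n - 1)) +
          Ideal.span {x} * I ^ n)
        (maximalIdeal R * I ^ n) ≤ 1) ∧
    ∃ y ∈ maximalIdeal R, ∃ b ∈ I, ∀ n : ℕ, 1 ≤ n →
      maximalIdeal R * I ^ n =
        Ideal.span (Set.range a) * (maximalIdeal R * I ^ (n - 1)) +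
          Ideal.span {x} * I ^ n + Ideal.span {y * b ^ n} := by
  set m : Ideal R := maximalIdeal R with hm
  set J : Ideal R := Ideal.span (Set.range a) with hJ
  set X : Ideal R := Ideal.span {x} with hX
  have hJI : J ≤ I := Ideal.span_le.mpr (Set.range_subset_iff.mpr ha)
  have hXm : X ≤ m := Ideal.span_le.mpr (Set.singleton_subset_iff.mpr hx)
  -- extraction from hone
  obtain ⟨hKey, g, hgT, hgen⟩ := qlen_eq_one_extract ((m : Set R) * (I : Set R))
    (Submodule.mul_eq_span_mul_set m I) hone
  obtain ⟨y, hy, b, hb, rfl⟩ := Set.mem_mul.mp hgT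
  -- the base case
  have h1 : m * I = J * m + X * I + Ideal.span {y * b} := by
      apply le_antisymm
      · refine hgen.trans (le_of_eq ?_)
        rw [← Submodule.add_eq_sup]; ring
      · rw [Submodule.add_eq_sup, Submodule.add_eq_sup]
        refine sup_le (sup_le ?_ ?_) ?_
        · calc J * m = m * J := mul_comm _ _
            _ ≤ m * I := Ideal.mul_mono le_rfl hJI
        · exact Ideal.mul_mono hXm le_rfl
        · rw [Ideal.span_le, Set.singleton_subset_iff]
          exact Ideal.mul_mem_mul hy hb
  -- the key induction
  have hC : ∀ n : ℕ, 1 ≤ n → m * I ^ n =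
      J * (m * I ^ (n - 1)) + X * I ^ n + Ideal.span {y * b ^ n} := by
    intro n hn
    induction n, hn using Nat.le_induction with
    | base =>
      simpa only [pow_one, Nat.sub_self, pow_zero, mul_one] using h1
    | succ n hn ih =>
      have hn1 : n - 1 + 1 = n := Nat.sub_add_cancel hn
      have hIpow : I ^ n = I ^ (n - 1) * I := by rw [← pow_succ, hn1]
      have hbn : (b : R) ^ n = b ^ (n - 1) * b := by rw [← pow_succ, hn1]
      simp only [Nat.add_sub_cancel]
      have hyb : Ideal.span {y * b} ≤ m * I := by
        rw [Ideal.span_le, Set.singleton_subset_iff]; exact Ideal.mul_mem_mul hy hb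
      have hbI : Ideal.span {b} ≤ I := Ideal.span_le.mpr (Set.singleton_subset_iff.mpr hb)
      apply le_antisymm
      · have e1 : m * I ^ (n + 1) = (m * I) * I ^ n := by ring
        rw [e1, h1, add_mul, add_mul]
        rw [Submodule.add_eq_sup, Submodule.add_eq_sup]
        refine sup_le (sup_le ?_ ?_) ?_
        · refine le_trans (le_of_eq (by ring : J * m * I ^ n = J * (m * I ^ n))) ?_
          rw [Submodule.add_eq_sup, Submodule.add_eq_sup]
          exact le_sup_of_le_left (le_sup_of_le_left le_rfl)
        · refine le_trans (le_of_eq (by ring : X * I * I ^ n = X * I ^ (n+1))) ?_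
          rw [Submodule.add_eq_sup, Submodule.add_eq_sup]
          exact le_sup_of_le_left (le_sup_of_le_right le_rfl)
        · have e2 : Ideal.span {y * b} * I ^ n = Ideal.span {b} * (Ideal.span {y} * I ^ n) := by
            rw [← Ideal.span_singleton_mul_span_singleton]; ring
          rw [e2]
          have hyI : Ideal.span {y} * I ^ n ≤ m * I ^ n :=
            Ideal.mul_mono (Ideal.span_le.mpr (Set.singleton_subset_iff.mpr hy)) le_rfl
          refine le_trans (Ideal.mul_mono le_rfl (hyI.trans (le_of_eq ih))) ?_
          rw [mul_add, mul_add]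
          rw [Submodule.add_eq_sup, Submodule.add_eq_sup, Submodule.add_eq_sup,
            Submodule.add_eq_sup]
          refine sup_le (sup_le ?_ ?_) ?_
          · refine le_sup_of_le_left (le_sup_of_le_left ?_)
            calc Ideal.span {b} * (J * (m * I ^ (n - 1)))
                ≤ I * (J * (m * I ^ (n - 1))) := Ideal.mul_mono hbI le_rfl
              _ = J * (m * (I ^ (n-1) * I)) := by ring
              _ = J * (m * I ^ n) := by rw [← hIpow]
          · refine le_sup_of_le_left (le_sup_of_le_right ?_)
            calc Ideal.span {b} * (X * I ^ n) ≤ I * (X * I ^ n) := Ideal.mul_mono hbI le_rfl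
              _ = X * I ^ (n + 1) := by ring
          · refine le_sup_of_le_right (le_of_eq ?_)
            rw [Ideal.span_singleton_mul_span_singleton]
            congr 1
            ring
      · rw [Submodule.add_eq_sup, Submodule.add_eq_sup]
        refine sup_le (sup_le ?_ ?_) ?_
        · calc J * (m * I ^ n) ≤ I * (m * I ^ n) := Ideal.mul_mono hJI le_rfl
            _ = m * I ^ (n + 1) := by ring
        · exact Ideal.mul_mono hXm le_rfl
        · rw [Ideal.span_le, Set.singleton_subset_iff]
          exact Ideal.mul_mem_mul hy (Ideal.pow_mem_pow hb _)
  refine ⟨?_, y, hy, b, hb, hC⟩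
  -- length ≤ 1 part
  intro n hn
  have hn1 : n - 1 + 1 = n := Nat.sub_add_cancel hn
  have hIpow : I ^ n = I ^ (n - 1) * I := by rw [← pow_succ, hn1]
  have hbn : (b : R) ^ n = b ^ (n - 1) * b := by rw [← pow_succ, hn1]
  have hbI : Ideal.span {b ^ (n-1)} ≤ I ^ (n-1) :=
    Ideal.span_le.mpr (Set.singleton_subset_iff.mpr (Ideal.pow_mem_pow hb _))
  have hyb : Ideal.span {y * b} ≤ m * I := by
    rw [Ideal.span_le, Set.singleton_subset_iff]; exact Ideal.mul_mem_mul hy hb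
  apply qlen_le_one (y * b ^ n)
  · exact Ideal.mul_mem_mul hy (Ideal.pow_mem_pow hb _)
  · rw [← Submodule.add_eq_sup]
    exact le_of_eq (hC n hn)
  · rw [hC n hn, mul_add, mul_add]
    rw [Submodule.add_eq_sup, Submodule.add_eq_sup, Submodule.add_eq_sup]
    refine sup_le (sup_le ?_ ?_) ?_
    · refine le_sup_of_le_left ?_
      calc m * (J * (m * I ^ (n - 1))) = J * ((m * m) * I ^ (n-1)) := by ring
        _ ≤ J * (m * I ^ (n-1)) := Ideal.mul_mono le_rfl (Ideal.mul_mono Ideal.mul_le_right le_rfl)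
    · refine le_sup_of_le_right ?_
      calc m * (X * I ^ n) = X * (m * I ^ n) := by ring
        _ ≤ X * I ^ n := Ideal.mul_mono le_rfl Ideal.mul_le_right
    · have e3 : m * Ideal.span {y * b ^ n} =
          (m * Ideal.span {y * b}) * Ideal.span {b ^ (n-1)} := by
        rw [mul_assoc, Ideal.span_singleton_mul_span_singleton]
        congr 2
        rw [hbn]; ring
      rw [e3]
      calc (m * Ideal.span {y * b}) * Ideal.span {b ^ (n-1)}
          ≤ (m * (m * I)) * Ideal.span {b ^ (n-1)} :=
            Ideal.mul_mono (Ideal.mul_mono le_rfl hyb) le_rfl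
        _ ≤ (X * I + J * m) * Ideal.span {b ^ (n-1)} := Ideal.mul_mono hKey le_rfl
        _ = (X * I) * Ideal.span {b ^ (n-1)} + (J * m) * Ideal.span {b ^ (n-1)} := add_mul _ _ _
        _ ≤ J * (m * I ^ (n-1)) + X * I ^ n := by
            rw [Submodule.add_eq_sup, Submodule.add_eq_sup]
            refine sup_le ?_ ?_
            · refine le_sup_of_le_right ?_
              calc (X * I) * Ideal.span {b ^ (n-1)} ≤ (X * I) * I ^ (n-1) :=
                  Ideal.mul_mono le_rfl hbI
                _ = X * (I ^ (n-1) * I) := by ring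
                _ = X * I ^ n := by rw [← hIpow]
            · refine le_sup_of_le_left ?_
              calc (J * m) * Ideal.span {b ^ (n-1)} ≤ (J * m) * I ^ (n-1) :=
                  Ideal.mul_mono le_rfl hbI
                _ = J * (m * I ^ (n-1)) := by ring
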